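/- Consider the FGM construction with nonnegative marginals: I : Ω → {0,1}^d a random vector and, for j ∈ {1,2}, random vectors X^[j] of nonnegative rvs such that I, X^[1]_1,...,X^[1]_d, X^[2]_1,...,X^[2]_d are mutually independent, X^[1]_k with cdf 1−(1−F_k)^2 and X^[2]_k with cdf F_k^2, and X_k = (1−I_k)X^[1]_k + I_k X^[2]_k. Let S = X_1 + ... + X_d. Then for every t ≥ 0, E[e^{−tS}] = Σ_{i∈{0,1}^d} P(I = i) ∏_{k=1}^d E[exp(−t X^[i_k+1]_k)], where X^[i_k+1]_k denotes X^[1]_k if i_k = 0 and X^[2]_k if i_k = 1. -/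

import Mathlib

open MeasureTheory ProbabilityTheory

/-- Codomains of the `2d+1` random elements in the FGM construction: the
Bernoulli vector `I` (index `none`) and the `2d` order-statistic components (index
`some (k, j)`, where `j = 0` is the minimum and `j = 1` the maximum). -/
def fgmType (d : ℕ) : Option (Fin d × Fin 2) → Type
  | none => Fin d → Fin 2
  | some _ => ℝ

instance fgmTypeMeasurableSpace (d : ℕ) (o : Option (Fin d × Fin 2)) :
    MeasurableSpace (fgmType d o) := by
  cases o with
  | none => exact (inferInstance : MeasurableSpace (Fin d → Fin 2))
  | some p => exact (inferInstance : MeasurableSpace ℝ)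

/-- The family consisting of the Bernoulli random vector `I` together with the `2d`
order-statistic components `X j k`. -/
def fgmFamily {Ω : Type*} (d : ℕ) (I : Ω → Fin d → Fin 2)
    (X : Fin 2 → Fin d → Ω → ℝ) : (o : Option (Fin d × Fin 2)) → Ω → fgmType d o
  | none => I
  | some p => X p.2 p.1


lemma aux_integrable_of_Icc {Ω : Type*} [MeasurableSpace Ω] (P : Measure Ω)
    [IsProbabilityMeasure P] (f : Ω → ℝ) (hf : Measurable f)
    (hb : ∀ ω, f ω ∈ Set.Icc (0:ℝ) 1) : Integrable f P := by
  refine (integrable_const (1:ℝ)).mono' hf.aestronglyMeasurable (ae_of_all _ fun ω => ?_)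
  rw [Real.norm_eq_abs, abs_of_nonneg (hb ω).1]
  exact (hb ω).2

lemma aux_integral_prod_indep {Ω ι : Type*} [MeasurableSpace Ω] (P : Measure Ω)
    [IsProbabilityMeasure P] (g : ι → Ω → ℝ) (hmeas : ∀ i, Measurable (g i))
    (hb : ∀ i ω, g i ω ∈ Set.Icc (0:ℝ) 1)
    (hindep : iIndepFun g P)
    (s : Finset ι) :
    ∫ ω, ∏ i ∈ s, g i ω ∂P = ∏ i ∈ s, ∫ ω, g i ω ∂P := by
  classical
  have hpb : ∀ (s : Finset ι) ω, (∏ i ∈ s, g i ω) ∈ Set.Icc (0:ℝ) 1 := fun s ω =>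
    ⟨Finset.prod_nonneg fun i _ => (hb i ω).1,
     Finset.prod_le_one (fun i _ => (hb i ω).1) (fun i _ => (hb i ω).2)⟩
  have hpm : ∀ (s : Finset ι), Measurable fun ω => ∏ i ∈ s, g i ω := fun s =>
    Finset.measurable_prod s fun i _ => hmeas i
  have hpint : ∀ (s : Finset ι), Integrable (fun ω => ∏ i ∈ s, g i ω) P := fun s =>
    aux_integrable_of_Icc P _ (hpm s) (hpb s)
  induction s using Finset.induction with
  | empty => simp
  | @insert a s ha ih =>
    have hind : IndepFun (g a) (∏ j ∈ s, g j) P :=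
      (hindep.indepFun_finsetProd_of_notMem hmeas ha).symm
    have h1 : Integrable (fun ω => ∏ i ∈ s, g i ω) P := hpint s
    have h2 : Integrable (g a) P := aux_integrable_of_Icc P _ (hmeas a) (hb a)
    have heq : (g a * ∏ j ∈ s, g j) = (fun ω => g a ω * ∏ i ∈ s, g i ω) := by
      funext ω; simp [Finset.prod_apply]
    have h1' : Integrable (∏ j ∈ s, g j) P := by
      have : (∏ j ∈ s, g j) = fun ω => ∏ i ∈ s, g i ω := by funext ω; simp [Finset.prod_apply]
      rw [this]; exact hpint s
    have h2 : Integrable (g a) P := aux_integrable_of_Icc P _ (hmeas a) (hb a)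
    have hmul := hind.integral_mul_eq_mul_integral h2.aestronglyMeasurable h1'.aestronglyMeasurable
    rw [heq] at hmul
    simp only [Finset.prod_insert ha]
    rw [hmul, ← ih]
    congr 1
    have : (∏ j ∈ s, g j) = fun ω => ∏ i ∈ s, g i ω := by funext ω; simp [Finset.prod_apply]
    rw [this]

noncomputable def fgmPhi (d : ℕ) (t : ℝ) (i : Fin d → Fin 2) :
    (o : Option (Fin d × Fin 2)) → fgmType d o → ℝ
  | none => fun v : Fin d → Fin 2 => if v = i then 1 else 0
  | some p => fun x : ℝ => if p.2 = i p.1 then Real.exp (-t * x) else 1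

lemma fgmPhi_measurable (d : ℕ) (t : ℝ) (i : Fin d → Fin 2) (o : Option (Fin d × Fin 2)) :
    Measurable (fgmPhi d t i o) := by
  cases o with
  | none =>
    exact measurable_of_countable (α := Fin d → Fin 2) _
  | some p =>
    show Measurable fun x : ℝ => if p.2 = i p.1 then Real.exp (-t * x) else 1
    split
    · exact (Real.continuous_exp.comp (continuous_const.mul continuous_id)).measurable
    · exact measurable_const


/-- Theorem 3.1: the Laplace–Stieltjes transform of the aggregate rv
`S = X_1 + ⋯ + X_d` of the FGM construction with nonnegative marginals. -/
theorem fgm_aggregate_lst {Ω : Type*} [MeasurableSpace Ω]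
    (P : Measure Ω) [IsProbabilityMeasure P] (d : ℕ) (F : Fin d → ℝ → ℝ)
    (I : Ω → Fin d → Fin 2) (X : Fin 2 → Fin d → Ω → ℝ)
    (hI : Measurable I) (hX : ∀ j k, Measurable (X j k))
    (hnonneg : ∀ j k ω, 0 ≤ X j k ω)
    (hIndep : iIndepFun (fgmFamily d I X) P)
    (hcdf_min : ∀ k x, (P {ω | X 0 k ω ≤ x}).toReal = 1 - (1 - F k x) ^ 2)
    (hcdf_max : ∀ k x, (P {ω | X 1 k ω ≤ x}).toReal = (F k x) ^ 2) :
    ∀ t : ℝ, 0 ≤ t →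
      ∫ ω, Real.exp (-t * ∑ k,
          ((1 - ((I ω k : ℕ) : ℝ)) * X 0 k ω + ((I ω k : ℕ) : ℝ) * X 1 k ω)) ∂P
        = ∑ i : Fin d → Fin 2, (P {ω | I ω = i}).toReal *
            ∏ k, ∫ ω, Real.exp (-t * X (i k) k ω) ∂P := by
  intro t ht
  classical
  set g : (Fin d → Fin 2) → Option (Fin d × Fin 2) → Ω → ℝ :=
    fun i o => fgmPhi d t i o ∘ fgmFamily d I X o with hgdef
  -- explicit description of g
  have h2cases : ∀ j : Fin 2, j = 0 ∨ j = 1 := by decide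
  have hgnone : ∀ i ω, g i none ω = if I ω = i then 1 else 0 := fun i ω => by rw [hgdef]; rfl
  have hgsome : ∀ i (k : Fin d) (j : Fin 2) ω,
      g i (some (k, j)) ω = if j = i k then Real.exp (-t * X j k ω) else 1 :=
    fun i k j ω => by rw [hgdef]; rfl
  -- independence of the composed family
  have hindepg : ∀ i, iIndepFun (g i) P :=
    fun i => hIndep.comp _ (fgmPhi_measurable d t i)
  -- measurability of the family fgmFamily
  have hfam : ∀ o, Measurable (fgmFamily d I X o) := by
    intro o; cases o with
    | none => exact hI
    | some p => exact hX p.2 p.1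
  have hmeasg : ∀ i o, Measurable (g i o) :=
    fun i o => (fgmPhi_measurable d t i o).comp (hfam o)
  have hexpmem : ∀ (j : Fin 2) (k : Fin d) ω,
      Real.exp (-t * X j k ω) ∈ Set.Icc (0:ℝ) 1 := by
    intro j k ω
    refine ⟨(Real.exp_pos _).le, Real.exp_le_one_iff.mpr ?_⟩
    have := mul_nonneg ht (hnonneg j k ω)
    linarith
  have hbg : ∀ i o ω, g i o ω ∈ Set.Icc (0:ℝ) 1 := by
    intro i o ω
    cases o with
    | none =>
      rw [hgnone]
      split <;> simp
    | some p =>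
      rcases p with ⟨k, j⟩
      rw [hgsome]
      split
      · exact hexpmem j k ω
      · simp
  -- product decomposition
  have hprod : ∀ i ω, (∏ o, g i o ω)
      = (if I ω = i then 1 else 0) * ∏ k, Real.exp (-t * X (i k) k ω) := by
    intro i ω
    rw [Fintype.prod_option, hgnone]
    congr 1
    rw [Fintype.prod_prod_type]
    refine Finset.prod_congr rfl fun k _ => ?_
    rw [Fin.prod_univ_two, hgsome, hgsome]
    rcases h2cases (i k) with h | h <;> rw [h] <;> norm_num
  -- pointwise identity for the integrand
  have key : ∀ ω, Real.exp (-t * ∑ k,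
      ((1 - ((I ω k : ℕ) : ℝ)) * X 0 k ω + ((I ω k : ℕ) : ℝ) * X 1 k ω))
      = ∑ i : Fin d → Fin 2, ∏ o, g i o ω := by
    intro ω
    have hsel : (-t * ∑ k, ((1 - ((I ω k : ℕ) : ℝ)) * X 0 k ω + ((I ω k : ℕ) : ℝ) * X 1 k ω))
        = ∑ k, -t * X (I ω k) k ω := by
      rw [Finset.mul_sum]
      refine Finset.sum_congr rfl fun k _ => ?_
      rcases h2cases (I ω k) with h | h <;> rw [h] <;> simp <;> ring
    rw [hsel, Real.exp_sum]
    symm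
    rw [Fintype.sum_eq_single (I ω)]
    · rw [hprod]; simp
    · intro i hi
      rw [hprod]
      simp [Ne.symm hi]
  have hintg : ∀ i : Fin d → Fin 2, Integrable (fun ω => ∏ o, g i o ω) P := by
    intro i
    refine aux_integrable_of_Icc P _ (Finset.measurable_prod _ fun o _ => hmeasg i o) ?_
    intro ω
    exact ⟨Finset.prod_nonneg fun o _ => (hbg i o ω).1,
      Finset.prod_le_one (fun o _ => (hbg i o ω).1) (fun o _ => (hbg i o ω).2)⟩
  calc ∫ ω, Real.exp (-t * ∑ k,
          ((1 - ((I ω k : ℕ) : ℝ)) * X 0 k ω + ((I ω k : ℕ) : ℝ) * X 1 k ω)) ∂P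
      = ∫ ω, ∑ i : Fin d → Fin 2, ∏ o, g i o ω ∂P := integral_congr_ae (Filter.Eventually.of_forall key)
    _ = ∑ i : Fin d → Fin 2, ∫ ω, ∏ o, g i o ω ∂P :=
        integral_finset_sum _ fun i _ => hintg i
    _ = ∑ i : Fin d → Fin 2, (P {ω | I ω = i}).toReal *
            ∏ k, ∫ ω, Real.exp (-t * X (i k) k ω) ∂P := by
        refine Finset.sum_congr rfl fun i _ => ?_
        rw [aux_integral_prod_indep P (g i) (hmeasg i) (hbg i) (hindepg i) Finset.univ]
        rw [Fintype.prod_option]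
        congr 1
        · -- integral of the indicator
          have hset : MeasurableSet {ω | I ω = i} := hI (measurableSet_singleton i)
          have : (fun ω => g i none ω) = Set.indicator {ω | I ω = i} (fun _ => (1:ℝ)) := by
            funext ω
            rw [hgnone]
            by_cases h : I ω = i <;> simp [Set.indicator_apply, h]
          calc ∫ ω, g i none ω ∂P = ∫ ω, Set.indicator {ω | I ω = i} (fun _ => (1:ℝ)) ω ∂P := by
                rw [this]
            _ = (P {ω | I ω = i}).toReal := by
                rw [integral_indicator_const _ hset]; simp; rfl
        · rw [Fintype.prod_prod_type]
          refine Finset.prod_congr rfl fun k _ => ?_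
          rw [Fin.prod_univ_two]
          have h1 : ∀ j : Fin 2, j = i k →
              ∫ ω, g i (some (k, j)) ω ∂P = ∫ ω, Real.exp (-t * X (i k) k ω) ∂P := by
            intro j hj
            subst hj
            exact integral_congr_ae (Filter.Eventually.of_forall fun ω => by rw [hgsome]; simp)
          have h0 : ∀ j : Fin 2, j ≠ i k → ∫ ω, g i (some (k, j)) ω ∂P = 1 := by
            intro j hj
            have : (fun ω => g i (some (k, j)) ω) = fun _ => (1:ℝ) := by
              funext ω; rw [hgsome]; simp [hj]
            rw [this]; simp
          rcases h2cases (i k) with h | h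
          · rw [h1 0 h.symm, h0 1 (by rw [h]; decide)]; ring
          · rw [h1 1 h.symm, h0 0 (by rw [h]; decide)]; ring
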